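/- Let M be a finite J-trivial monoid and x ∈ M, and set e := lfix(x) and f := rfix(x). Then the following are equivalent: (1) x admits a non-trivial factorization, i.e., there exist u, v ∈ M with x = u·v, e·u ≠ e and v·f ≠ f; (2) x admits a compatible factorization, i.e., there exist u, v ∈ M with x = u·v such that u and v are not idempotent, lfix(u) = e, rfix(v) = f, and rfix(u) = lfix(v). -/

import Mathlib

/-- The `J`-preorder on a monoid: `x ≤_J y` iff `x = u * y * v` for some `u, v`. -/
def leJ {M : Type*} [Monoid M] (x y : M) : Prop := ∃ u v : M, x = u * y * v

/-- A monoid is `J`-trivial if `M x M = M y M` implies `x = y`. -/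
def JTrivial (M : Type*) [Monoid M] : Prop :=
  ∀ x y : M, {z : M | ∃ u v : M, z = u * x * v} = {z : M | ∃ u v : M, z = u * y * v} → x = y

open Classical

/-- `lfix x`: the `≤_J`-minimum of the idempotents `e` with `e * x = x`
(it exists in a finite `J`-trivial monoid). -/
noncomputable def lfixF {M : Type*} [Monoid M] (x : M) : M :=
  if h : ∃ e : M, (IsIdempotentElem e ∧ e * x = x) ∧
      ∀ f : M, IsIdempotentElem f → f * x = x → leJ e f
  then h.choose else 1

/-- `rfix x`: the `≤_J`-minimum of the idempotents `e` with `x * e = x`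
(it exists in a finite `J`-trivial monoid). -/
noncomputable def rfixF {M : Type*} [Monoid M] (x : M) : M :=
  if h : ∃ e : M, (IsIdempotentElem e ∧ x * e = x) ∧
      ∀ f : M, IsIdempotentElem f → x * f = x → leJ e f
  then h.choose else 1

section Aux

variable {M : Type*} [Monoid M]

theorem leJ_refl (x : M) : leJ x x := ⟨1, 1, by simp⟩

theorem leJ_trans {a b c : M} (h1 : leJ a b) (h2 : leJ b c) : leJ a c := by
  obtain ⟨u, v, rfl⟩ := h1
  obtain ⟨s, t, rfl⟩ := h2
  exact ⟨u * s, t * v, by simp [mul_assoc]⟩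

theorem leJ_antisymm (hJ : JTrivial M) {a b : M} (h1 : leJ a b) (h2 : leJ b a) : a = b := by
  apply hJ
  ext z
  simp only [Set.mem_setOf_eq]
  constructor
  · rintro ⟨p, q, rfl⟩
    obtain ⟨s, t, hst⟩ := h1
    exact ⟨p * s, t * q, by rw [hst]; simp [mul_assoc]⟩
  · rintro ⟨p, q, rfl⟩
    obtain ⟨s, t, hst⟩ := h2
    exact ⟨p * s, t * q, by rw [hst]; simp [mul_assoc]⟩

/-- In a finite monoid every element has an idempotent power. -/
theorem exists_idem_pow [Fintype M] (a : M) : ∃ n : ℕ, 0 < n ∧ IsIdempotentElem (a ^ n) := by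
  have main : ∀ i j : ℕ, i < j → a ^ i = a ^ j →
      ∃ n : ℕ, 0 < n ∧ IsIdempotentElem (a ^ n) := by
    intro i j hij hpow
    set d := j - i with hd
    have hd0 : 0 < d := by omega
    have key : ∀ m, i ≤ m → a ^ m = a ^ (m + d) := by
      intro m hm
      have h1 : a ^ m = a ^ (m - i) * a ^ i := by
        rw [← pow_add]; congr 1; omega
      rw [h1, hpow, ← pow_add]
      congr 1; omega
    have key2 : ∀ k m, i ≤ m → a ^ m = a ^ (m + k * d) := by
      intro k
      induction k with
      | zero => intro m hm; simp
      | succ k ih =>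
        intro m hm
        have h1 := ih m hm
        have h2 := key (m + k * d) (by omega)
        rw [h1, h2]
        congr 1; ring
    refine ⟨(i + 1) * d, by positivity, ?_⟩
    have hin : i ≤ (i + 1) * d := by
      have : (i + 1) * 1 ≤ (i + 1) * d := Nat.mul_le_mul_left _ hd0
      omega
    have := key2 (i + 1) ((i + 1) * d) hin
    unfold IsIdempotentElem
    rw [← pow_add, this]
  obtain ⟨i, j, hne, hij⟩ := Finite.exists_ne_map_eq_of_infinite (fun n : ℕ => a ^ n)
  rcases lt_or_gt_of_ne hne with h | h
  · exact main i j h hij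
  · exact main j i h hij.symm

theorem list_prod_fix_left [Fintype M] (x : M) :
    ∀ l : List M, (∀ z ∈ l, z * x = x) → l.prod * x = x := by
  intro l
  induction l with
  | nil => simp
  | cons a l ih =>
    intro h
    rw [List.prod_cons, mul_assoc, ih (fun z hz => h z (List.mem_cons_of_mem a hz)),
      h a List.mem_cons_self]

theorem list_prod_fix_right [Fintype M] (x : M) :
    ∀ l : List M, (∀ z ∈ l, x * z = x) → x * l.prod = x := by
  intro l
  induction l with
  | nil => simp
  | cons a l ih =>
    intro h
    rw [List.prod_cons, ← mul_assoc, h a List.mem_cons_self,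
      ih (fun z hz => h z (List.mem_cons_of_mem a hz))]

theorem pow_fix_left {p x : M} (h : p * x = x) : ∀ k : ℕ, p ^ k * x = x := by
  intro k
  induction k with
  | zero => simp
  | succ k ih => rw [pow_succ, mul_assoc, h, ih]

theorem pow_fix_right {p x : M} (h : x * p = x) : ∀ k : ℕ, x * p ^ k = x := by
  intro k
  induction k with
  | zero => simp
  | succ k ih => rw [pow_succ, ← mul_assoc, ih, h]

/-- Existence of a `≤_J`-minimum idempotent left fixer in a finite monoid. -/
theorem exists_lfix [Fintype M] (x : M) :
    ∃ e : M, (IsIdempotentElem e ∧ e * x = x) ∧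
      ∀ f : M, IsIdempotentElem f → f * x = x → leJ e f := by
  classical
  set l : List M := Finset.univ.toList.filter (fun z => decide (z * x = x)) with hl
  have hmem : ∀ z ∈ l, z * x = x := by
    intro z hz
    rw [hl, List.mem_filter] at hz
    exact of_decide_eq_true hz.2
  set p : M := l.prod with hp
  have hpfix : p * x = x := list_prod_fix_left x l hmem
  obtain ⟨n, hn0, hidem⟩ := exists_idem_pow p
  refine ⟨p ^ n, ⟨hidem, pow_fix_left hpfix n⟩, ?_⟩
  intro f hf hfx
  have hfl : f ∈ l := by
    rw [hl, List.mem_filter]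
    exact ⟨Finset.mem_toList.mpr (Finset.mem_univ f), decide_eq_true hfx⟩
  obtain ⟨s, t, hst⟩ := List.append_of_mem hfl
  have hps : p = s.prod * f * t.prod := by
    rw [hp, hst, List.prod_append, List.prod_cons, mul_assoc]
  refine ⟨p ^ (n - 1) * s.prod, t.prod, ?_⟩
  calc p ^ n = p ^ (n - 1) * p := by rw [← pow_succ]; congr 1; omega
  _ = p ^ (n - 1) * (s.prod * f * t.prod) := by rw [← hps]
  _ = p ^ (n - 1) * s.prod * f * t.prod := by simp [mul_assoc]

/-- Existence of a `≤_J`-minimum idempotent right fixer in a finite monoid. -/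
theorem exists_rfix [Fintype M] (x : M) :
    ∃ e : M, (IsIdempotentElem e ∧ x * e = x) ∧
      ∀ f : M, IsIdempotentElem f → x * f = x → leJ e f := by
  classical
  set l : List M := Finset.univ.toList.filter (fun z => decide (x * z = x)) with hl
  have hmem : ∀ z ∈ l, x * z = x := by
    intro z hz
    rw [hl, List.mem_filter] at hz
    exact of_decide_eq_true hz.2
  set p : M := l.prod with hp
  have hpfix : x * p = x := list_prod_fix_right x l hmem
  obtain ⟨n, hn0, hidem⟩ := exists_idem_pow p
  refine ⟨p ^ n, ⟨hidem, pow_fix_right hpfix n⟩, ?_⟩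
  intro f hf hfx
  have hfl : f ∈ l := by
    rw [hl, List.mem_filter]
    exact ⟨Finset.mem_toList.mpr (Finset.mem_univ f), decide_eq_true hfx⟩
  obtain ⟨s, t, hst⟩ := List.append_of_mem hfl
  have hps : p = s.prod * f * t.prod := by
    rw [hp, hst, List.prod_append, List.prod_cons, mul_assoc]
  refine ⟨p ^ (n - 1) * s.prod, t.prod, ?_⟩
  calc p ^ n = p ^ (n - 1) * p := by rw [← pow_succ]; congr 1; omega
  _ = p ^ (n - 1) * (s.prod * f * t.prod) := by rw [← hps]
  _ = p ^ (n - 1) * s.prod * f * t.prod := by simp [mul_assoc]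

theorem lfixF_spec [Fintype M] (x : M) :
    (IsIdempotentElem (lfixF x) ∧ lfixF x * x = x) ∧
      ∀ f : M, IsIdempotentElem f → f * x = x → leJ (lfixF x) f := by
  have hex := exists_lfix x
  unfold lfixF
  rw [dif_pos hex]
  exact hex.choose_spec

theorem rfixF_spec [Fintype M] (x : M) :
    (IsIdempotentElem (rfixF x) ∧ x * rfixF x = x) ∧
      ∀ f : M, IsIdempotentElem f → x * f = x → leJ (rfixF x) f := by
  have hex := exists_rfix x
  unfold rfixF
  rw [dif_pos hex]
  exact hex.choose_spec

theorem lfixF_idem [Fintype M] (x : M) : IsIdempotentElem (lfixF x) := (lfixF_spec x).1.1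
theorem lfixF_fix [Fintype M] (x : M) : lfixF x * x = x := (lfixF_spec x).1.2
theorem lfixF_min [Fintype M] {x f : M} (hf : IsIdempotentElem f) (hfx : f * x = x) :
    leJ (lfixF x) f := (lfixF_spec x).2 f hf hfx
theorem rfixF_idem [Fintype M] (x : M) : IsIdempotentElem (rfixF x) := (rfixF_spec x).1.1
theorem rfixF_fix [Fintype M] (x : M) : x * rfixF x = x := (rfixF_spec x).1.2
theorem rfixF_min [Fintype M] {x f : M} (hf : IsIdempotentElem f) (hfx : x * f = x) :
    leJ (rfixF x) f := (rfixF_spec x).2 f hf hfx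

/-- The size of the `≤_J`-lower set of an element. -/
noncomputable def muJ [Fintype M] (u : M) : ℕ :=
  (Finset.univ.filter (fun z => leJ z u)).card

theorem muJ_pos [Fintype M] (u : M) : 0 < muJ u :=
  Finset.card_pos.mpr ⟨u, Finset.mem_filter.mpr ⟨Finset.mem_univ u, leJ_refl u⟩⟩

theorem muJ_lt [Fintype M] (hJ : JTrivial M) {a b : M} (h : leJ a b) (hne : a ≠ b) :
    muJ a < muJ b := by
  apply Finset.card_lt_card
  constructor
  · intro z hz
    rw [Finset.mem_filter] at hz ⊢
    exact ⟨hz.1, leJ_trans hz.2 h⟩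
  · intro hsub
    have hb : b ∈ Finset.univ.filter (fun z => leJ z b) :=
      Finset.mem_filter.mpr ⟨Finset.mem_univ b, leJ_refl b⟩
    have hb' := hsub hb
    rw [Finset.mem_filter] at hb'
    exact hne (leJ_antisymm hJ h hb'.2)

/-- Main inductive step: from an invariant factorization one obtains a compatible one. -/
theorem key_lemma [Fintype M] (hJ : JTrivial M) (x : M) :
    ∀ n : ℕ, ∀ u v : M, muJ u + muJ v ≤ n →
      x = u * v → lfixF x * u = u → v * rfixF x = v → u ≠ lfixF x → v ≠ rfixF x →
      ∃ u' v' : M, x = u' * v' ∧ ¬ IsIdempotentElem u' ∧ ¬ IsIdempotentElem v' ∧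
        lfixF u' = lfixF x ∧ rfixF v' = rfixF x ∧ rfixF u' = lfixF v' := by
  intro n
  induction n with
  | zero =>
    intro u v hn
    have := muJ_pos u
    omega
  | succ n ih =>
    intro u v hn hx heu hvf hune hvne
    by_cases hA : rfixF u * v = v
    · by_cases hB : u * lfixF v = u
      · -- fixed point: (u, v) is a compatible factorization
        refine ⟨u, v, hx, ?_, ?_, ?_, ?_, ?_⟩
        · -- u is not idempotent
          intro hu
          apply hune
          apply leJ_antisymm hJ
          · exact ⟨1, u, by rw [one_mul]; exact heu.symm⟩
          · refine lfixF_min hu ?_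
            rw [hx, ← mul_assoc, hu]
        · -- v is not idempotent
          intro hv
          apply hvne
          apply leJ_antisymm hJ
          · exact ⟨v, 1, by rw [mul_one]; exact hvf.symm⟩
          · refine rfixF_min hv ?_
            rw [hx, mul_assoc, hv]
        · -- lfixF u = lfixF x
          apply leJ_antisymm hJ
          · exact lfixF_min (lfixF_idem x) heu
          · refine lfixF_min (lfixF_idem u) ?_
            rw [hx, ← mul_assoc, lfixF_fix u]
        · -- rfixF v = rfixF x
          apply leJ_antisymm hJ
          · exact rfixF_min (rfixF_idem x) hvf
          · refine rfixF_min (rfixF_idem v) ?_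
            rw [hx, mul_assoc, rfixF_fix v]
        · -- rfixF u = lfixF v
          apply leJ_antisymm hJ
          · exact rfixF_min (lfixF_idem v) hB
          · exact lfixF_min (rfixF_idem u) hA
      · -- recurse on (u * lfixF v, v)
        have hstep : leJ (u * lfixF v) u := ⟨1, lfixF v, by rw [one_mul]⟩
        have hlt : muJ (u * lfixF v) < muJ u := muJ_lt hJ hstep hB
        apply ih (u * lfixF v) v (by omega)
        · rw [hx, mul_assoc, lfixF_fix v]
        · rw [← mul_assoc, heu]
        · exact hvf
        · intro h
          apply hune
          apply leJ_antisymm hJ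
          · exact ⟨1, u, by rw [one_mul]; exact heu.symm⟩
          · exact ⟨1, lfixF v, by rw [one_mul]; exact h.symm⟩
        · exact hvne
    · -- recurse on (u, rfixF u * v)
      have hstep : leJ (rfixF u * v) v := ⟨rfixF u, 1, by rw [mul_one]⟩
      have hlt : muJ (rfixF u * v) < muJ v := muJ_lt hJ hstep hA
      apply ih u (rfixF u * v) (by omega)
      · rw [hx, ← mul_assoc, rfixF_fix u]
      · exact heu
      · rw [mul_assoc, hvf]
      · exact hune
      · intro h
        apply hvne
        apply leJ_antisymm hJ
        · exact ⟨v, 1, by rw [mul_one]; exact hvf.symm⟩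
        · exact ⟨rfixF u, 1, by rw [mul_one]; exact h.symm⟩

end Aux

/-- In a finite `J`-trivial monoid, an element `x` admits a non-trivial factorization
if and only if it admits a compatible one. -/
theorem nontrivial_iff_compatible_factorization {M : Type*} [Monoid M] [Fintype M]
    (hJ : JTrivial M) (x : M) :
    (∃ u v : M, x = u * v ∧ lfixF x * u ≠ lfixF x ∧ v * rfixF x ≠ rfixF x) ↔
    (∃ u v : M, x = u * v ∧ ¬ IsIdempotentElem u ∧ ¬ IsIdempotentElem v ∧
      lfixF u = lfixF x ∧ rfixF v = rfixF x ∧ rfixF u = lfixF v) := by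
  constructor
  · rintro ⟨u0, v0, hx, hu0, hv0⟩
    apply key_lemma hJ x (muJ (lfixF x * u0) + muJ (v0 * rfixF x)) (lfixF x * u0)
      (v0 * rfixF x) le_rfl
    · calc x = lfixF x * x * rfixF x := by rw [lfixF_fix, rfixF_fix]
      _ = lfixF x * (u0 * v0) * rfixF x := by rw [← hx]
      _ = lfixF x * u0 * (v0 * rfixF x) := by simp [mul_assoc]
    · rw [← mul_assoc, lfixF_idem x]
    · rw [mul_assoc, rfixF_idem x]
    · exact hu0
    · exact hv0
  · rintro ⟨u, v, hx, hui, hvi, hlu, hrv, huv⟩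
    refine ⟨u, v, hx, ?_, ?_⟩
    · intro h
      apply hui
      have hu : lfixF x * u = u := by rw [← hlu]; exact lfixF_fix u
      rw [hu] at h
      rw [h]
      exact lfixF_idem x
    · intro h
      apply hvi
      have hv : v * rfixF x = v := by rw [← hrv]; exact rfixF_fix v
      rw [hv] at h
      rw [h]
      exact rfixF_idem x
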